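/- Let F be a type with decidable equality, n, k, t natural numbers with k ≤ n, C ⊆ (Fin n → F) a nonempty set of codewords, M a type of secrets, and σ : C → M. Suppose the scheme has k-privacy in the combinatorial sense: for every c ∈ C, every set T ⊆ Fin n with |T| ≤ k, and every secret m in the image of σ, there exists c' ∈ C with σ c' = m and c' i = c i for all i ∈ T. Suppose moreover that σ takes at least two distinct values on C. If 2t ≥ n − k, then there exist codewords c₁, c₂ ∈ C with σ c₁ ≠ σ c₂ and a word w : Fin n → F with hammingDist w c₁ ≤ t and hammingDist w c₂ ≤ t. Consequently no decoding rule can correct t errors, so the maximum number of errors that a (k+1)-out-of-n secret sharing scheme can correct is at most ⌊(n−k−1)/2⌋; in particular, a (k+1)-out-of-(3k−2u) scheme with u ≥ 1 cannot correct k − u errors. -/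
import Mathlib


/-- A `(k+1)`-out-of-`n` secret sharing scheme with `k`-privacy cannot correct
`t` errors when `2t ≥ n - k`: there are two share vectors carrying distinct
secrets and a word within Hamming distance `t` of both. -/
theorem secret_sharing_cannot_correct_many_errors
    {F : Type*} [DecidableEq F] (n k t : ℕ) (hkn : k ≤ n)
    (C : Set (Fin n → F)) (hCne : C.Nonempty) (M : Type*) (σ : C → M)
    (hpriv : ∀ c : C, ∀ T : Finset (Fin n), T.card ≤ k → ∀ m : M,
      (∃ c₀ : C, σ c₀ = m) →
      ∃ c' : C, σ c' = m ∧ ∀ i ∈ T, (c' : Fin n → F) i = (c : Fin n → F) i)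
    (htwo : ∃ c₁ c₂ : C, σ c₁ ≠ σ c₂)
    (ht : n - k ≤ 2 * t) :
    ∃ c₁ c₂ : C, σ c₁ ≠ σ c₂ ∧ ∃ w : Fin n → F,
      hammingDist w (c₁ : Fin n → F) ≤ t ∧
      hammingDist w (c₂ : Fin n → F) ≤ t := by
  classical
  obtain ⟨c₁, c₂, hne⟩ := htwo
  -- pick a set T of size k
  set T : Finset (Fin n) := Finset.univ.map (Fin.castLEEmb hkn) with hT
  have hTcard : T.card = k := by simp [hT]
  obtain ⟨c', hc', hagree⟩ := hpriv c₁ T (le_of_eq hTcard) (σ c₂) ⟨c₂, rfl⟩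
  have hne' : σ c₁ ≠ σ c' := fun h => hne (h.trans hc')
  -- the difference set
  set D : Finset (Fin n) := Finset.univ.filter
    (fun i => (c₁ : Fin n → F) i ≠ (c' : Fin n → F) i) with hD
  have hDsub : D ⊆ Tᶜ := by
    intro i hi
    simp only [Finset.mem_compl]
    intro hiT
    have := hagree i hiT
    simp only [hD, Finset.mem_filter] at hi
    exact hi.2 this.symm
  have hDle : D.card ≤ 2 * t := by
    calc D.card ≤ Tᶜ.card := Finset.card_le_card hDsub
    _ = n - k := by
        rw [Finset.card_compl, hTcard]; simp
    _ ≤ 2 * t := ht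
  obtain ⟨S, hSsub, hScard⟩ := Finset.exists_subset_card_eq (s := D)
    (n := min D.card t) (min_le_left _ _)
  set w : Fin n → F := fun i => if i ∈ S then (c' : Fin n → F) i else (c₁ : Fin n → F) i
    with hw
  refine ⟨c₁, c', hne', w, ?_, ?_⟩
  · have h1 : (Finset.univ.filter (fun i => w i ≠ (c₁ : Fin n → F) i)) ⊆ S := by
      intro i hi
      simp only [Finset.mem_filter, hw] at hi
      by_contra hiS
      exact hi.2 (by simp [hiS])
    calc hammingDist w (c₁ : Fin n → F) ≤ S.card := Finset.card_le_card h1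
      _ ≤ t := by rw [hScard]; exact min_le_right _ _
  · have h2 : (Finset.univ.filter (fun i => w i ≠ (c' : Fin n → F) i)) ⊆ D \ S := by
      intro i hi
      simp only [Finset.mem_filter, hw] at hi
      by_cases hiS : i ∈ S
      · exact absurd (by simp [hiS]) hi.2
      · by_cases hiD : i ∈ D
        · exact Finset.mem_sdiff.mpr ⟨hiD, hiS⟩
        · exfalso
          simp only [hD, Finset.mem_filter, Finset.mem_univ, true_and, not_not] at hiD
          exact hi.2 (by simp [hiS, hiD])
    calc hammingDist w (c' : Fin n → F) ≤ (D \ S).card := Finset.card_le_card h2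
      _ = D.card - S.card := Finset.card_sdiff_of_subset hSsub
      _ ≤ t := by
          rw [hScard]
          omega
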